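/- Assume λ·T > 0 and c_n ≥ 0 for all n, and let S be any set of pairs (b, p) of binary vectors b_n ∈ {0,1}, p_{m,n} ∈ {0,1} (representing the constraints (7b) that do not involve grid power). Then (b*, p*) minimizes the reduced objective λ·T·Σ_{n∈N} max{ c_n/(λ·T) − Δ_n(p), c_n/(λ·T) }·b_n over S if and only if the tuple (b*, p*, P*) with P_n^{(g)*} := max{ −Δ_n(p*), 0 } minimizes C₁(b, P) := Σ_{n∈N} c_n·b_n + λ·T·Σ_{n∈N} P_n^{(g)}·b_n over all (b, p) ∈ S and all P^{(g)} ∈ ℝ^N satisfying P_n^{(g)} ≥ 0 and b_n·( Σ_{m∈M} p_{m,n}·P_n + P_n^{(o)} − P_n^{(g)} − I_n ) ≤ 0 for all n ∈ N; moreover the two minimum values coincide. -/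

import Mathlib

open Finset

/-- Total cost `C₁(b, P) = ∑ c_n·b_n + λ·T·∑ P_n^{(g)}·b_n`. -/
def deployCost {N : Type*} [Fintype N] (c : N → ℝ) (lam T : ℝ)
    (b Pg : N → ℝ) : ℝ :=
  (∑ n, c n * b n) + lam * T * ∑ n, Pg n * b n

/-- `Δ_n(p) = −∑_{m∈M} p_{m,n}·P_n − P_n^{(o)} + I_n`. -/
def remEnergy {M N : Type*} [Fintype M] (P Po I : N → ℝ)
    (p : M → N → ℝ) (n : N) : ℝ :=
  -(∑ m, p m n * P n) - Po n + I n

/-- The reduced objective (9):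
`λ·T·∑_n max{c_n/(λ·T) − Δ_n(p), c_n/(λ·T)}·b_n`. -/
noncomputable def reducedCost {M N : Type*} [Fintype M] [Fintype N] (c P Po I : N → ℝ)
    (lam T : ℝ) (b : N → ℝ) (p : M → N → ℝ) : ℝ :=
  lam * T * ∑ n, max (c n / (lam * T) - remEnergy P Po I p n)
    (c n / (lam * T)) * b n

lemma red_eq_deploy {M N : Type*} [Fintype M] [Fintype N] (c P Po I : N → ℝ)
    (lam T : ℝ) (h : lam * T ≠ 0) (b : N → ℝ) (p : M → N → ℝ) :
    reducedCost c P Po I lam T b p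
      = deployCost c lam T b (fun n => max (-(remEnergy P Po I p n)) 0) := by
  unfold reducedCost deployCost
  rw [Finset.mul_sum, Finset.mul_sum, ← Finset.sum_add_distrib]
  refine Finset.sum_congr rfl fun n _ => ?_
  dsimp only
  have hl := left_ne_zero_of_mul h
  have hT := right_ne_zero_of_mul h
  rcases le_total 0 (remEnergy P Po I p n) with h' | h'
  · rw [max_eq_right (by linarith), max_eq_right (by linarith)]
    field_simp
    ring
  · rw [max_eq_left (by linarith), max_eq_left (by linarith)]
    field_simp
    ring

lemma deploy_opt_pg {M N : Type*} [Fintype M] [Fintype N] (c P Po I : N → ℝ)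
    (lam T : ℝ) (hlamT : 0 < lam * T) (b : N → ℝ) (p : M → N → ℝ)
    (hb : ∀ n, b n = 0 ∨ b n = 1) (Pg : N → ℝ) (hPg : ∀ n, 0 ≤ Pg n)
    (hcon : ∀ n, b n * ((∑ m, p m n * P n) + Po n - Pg n - I n) ≤ 0) :
    deployCost c lam T b (fun n => max (-(remEnergy P Po I p n)) 0)
      ≤ deployCost c lam T b Pg := by
  unfold deployCost
  refine add_le_add_right (mul_le_mul_of_nonneg_left ?_ hlamT.le) _
  refine Finset.sum_le_sum fun n _ => ?_
  rcases hb n with h0 | h1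
  · simp [h0]
  · rw [h1, mul_one, mul_one]
    refine max_le ?_ (hPg n)
    have := hcon n
    rw [h1, one_mul] at this
    unfold remEnergy
    linarith

theorem reduced_problem_equiv {M N : Type*} [Fintype M] [Fintype N]
    (c P Po I : N → ℝ) (lam T : ℝ)
    (hc : ∀ n, 0 ≤ c n) (hlamT : 0 < lam * T)
    (S : Set ((N → ℝ) × (M → N → ℝ)))
    (hSbin : ∀ q ∈ S, (∀ n, q.1 n = 0 ∨ q.1 n = 1) ∧
      (∀ m n, q.2 m n = 0 ∨ q.2 m n = 1))
    (bs : N → ℝ) (ps : M → N → ℝ) (hmem : (bs, ps) ∈ S) :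
    ((∀ q ∈ S, reducedCost c P Po I lam T bs ps ≤ reducedCost c P Po I lam T q.1 q.2)
      ↔ ((∀ n, 0 ≤ max (-(remEnergy P Po I ps n)) 0) ∧
         (∀ n, bs n * ((∑ m, ps m n * P n) + Po n
            - max (-(remEnergy P Po I ps n)) 0 - I n) ≤ 0) ∧
         (∀ q ∈ S, ∀ Pg : N → ℝ, (∀ n, 0 ≤ Pg n) →
            (∀ n, q.1 n * ((∑ m, q.2 m n * P n) + Po n - Pg n - I n) ≤ 0) →
            deployCost c lam T bs (fun n => max (-(remEnergy P Po I ps n)) 0)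
              ≤ deployCost c lam T q.1 Pg)))
    ∧ reducedCost c P Po I lam T bs ps
      = deployCost c lam T bs (fun n => max (-(remEnergy P Po I ps n)) 0) := by
  have hne : lam * T ≠ 0 := ne_of_gt hlamT
  have key : ∀ (b : N → ℝ) (p : M → N → ℝ), (∀ n, b n = 0 ∨ b n = 1) →
      ∀ n, b n * ((∑ m, p m n * P n) + Po n
        - max (-(remEnergy P Po I p n)) 0 - I n) ≤ 0 := by
    intro b p hb n
    have h1 : (∑ m, p m n * P n) + Po n - max (-(remEnergy P Po I p n)) 0 - I n ≤ 0 := by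
      have := le_max_left (-(remEnergy P Po I p n)) 0
      unfold remEnergy at this ⊢
      linarith
    rcases hb n with h0 | h0 <;> simp [h0] <;> linarith
  refine ⟨⟨fun hmin => ?_, fun ⟨_, _, hmin⟩ q hq => ?_⟩,
    red_eq_deploy c P Po I lam T hne bs ps⟩
  · refine ⟨fun n => le_max_right _ _, key bs ps (hSbin _ hmem).1, ?_⟩
    intro q hq Pg hPg hcon
    calc deployCost c lam T bs (fun n => max (-(remEnergy P Po I ps n)) 0)
        = reducedCost c P Po I lam T bs ps := (red_eq_deploy c P Po I lam T hne bs ps).symm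
      _ ≤ reducedCost c P Po I lam T q.1 q.2 := hmin q hq
      _ = deployCost c lam T q.1 (fun n => max (-(remEnergy P Po I q.2 n)) 0) :=
          red_eq_deploy c P Po I lam T hne q.1 q.2
      _ ≤ deployCost c lam T q.1 Pg :=
          deploy_opt_pg c P Po I lam T hlamT q.1 q.2 (hSbin _ hq).1 Pg hPg hcon
  · calc reducedCost c P Po I lam T bs ps
        = deployCost c lam T bs (fun n => max (-(remEnergy P Po I ps n)) 0) :=
          red_eq_deploy c P Po I lam T hne bs ps
      _ ≤ deployCost c lam T q.1 (fun n => max (-(remEnergy P Po I q.2 n)) 0) :=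
          hmin q hq _ (fun n => le_max_right _ _) (key q.1 q.2 (hSbin _ hq).1)
      _ = reducedCost c P Po I lam T q.1 q.2 :=
          (red_eq_deploy c P Po I lam T hne q.1 q.2).symm
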